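/- arXiv:2405.18142 — 2 statements merged into one kernel-verified Lean document; each statement's English description precedes it below -/
import Mathlib

section
/- Let Φ_x ∈ ℝ^{(T+1)n×(T+1)n} and Φ_u ∈ ℝ^{(T+1)m×(T+1)n} be block lower triangular, write Φ = [Φ_x; Φ_u] (vertical stack), and let ΔA ∈ ℝ^{n×n}, ΔB ∈ ℝ^{n×m} be arbitrary, with Δℳ = [blkdiag_{T+1}(ΔA) blkdiag_{T+1}(ΔB)]. Then the matrix ZΔℳΦ ∈ ℝ^{(T+1)n×(T+1)n} is nilpotent with (ZΔℳΦ)^{T+1} = 0, and consequently both I + ZΔℳΦ and I + ΦZΔℳ are invertible. -/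
open MeasureTheory Matrix
open scoped ENNReal

/-- The ℓ¹-norm of a vector. -/
noncomputable def l1norm {ι : Type*} [Fintype ι] (v : ι → ℝ) : ℝ := ∑ i, |v i|

/-- The induced ℓ¹-norm of a matrix (maximum absolute column sum). -/
noncomputable def matL1 {ι κ : Type*} [Fintype ι] [Fintype κ] (M : Matrix ι κ ℝ) : ℝ :=
  ⨆ j, ∑ i, |M i j|

/-- The Wasserstein-1 distance (w.r.t. the ℓ¹-norm): infimum over couplings of the expected
ℓ¹-distance. -/
noncomputable def wass {ι : Type*} [Fintype ι] (P Q : Measure (ι → ℝ)) : ℝ :=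
  sInf { r | ∃ π : Measure ((ι → ℝ) × (ι → ℝ)),
    IsProbabilityMeasure π ∧ π.map Prod.fst = P ∧ π.map Prod.snd = Q ∧
    r = ∫ p, l1norm (p.1 - p.2) ∂π }

/-- The uniform empirical measure `(1/N) ∑ᵢ δ_{a i}`. -/
noncomputable def emp {ι : Type*} [Fintype ι] {N : ℕ} (a : Fin N → (ι → ℝ)) :
    Measure (ι → ℝ) :=
  (N : ℝ≥0∞)⁻¹ • ∑ i, Measure.dirac (a i)

/-- The block-downshift matrix `Z`, with `n × n` identity blocks on the first block
subdiagonal and zero blocks elsewhere. -/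
noncomputable def dshift (T n : ℕ) : Matrix (Fin (T+1) × Fin n) (Fin (T+1) × Fin n) ℝ :=
  fun p q => if (p.1 : ℕ) = (q.1 : ℕ) + 1 ∧ p.2 = q.2 then 1 else 0

/-- `blkdiag T M`: block-diagonal matrix with `T+1` copies of `M` on the diagonal. -/
noncomputable def blkdiag (T : ℕ) {n m : ℕ} (M : Matrix (Fin n) (Fin m) ℝ) :
    Matrix (Fin (T+1) × Fin n) (Fin (T+1) × Fin m) ℝ :=
  fun p q => if p.1 = q.1 then M p.2 q.2 else 0

/-- A block-partitioned matrix is block lower triangular: all blocks strictly above the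
block diagonal are zero. -/
def BlockLT {T n m : ℕ} (M : Matrix (Fin (T+1) × Fin m) (Fin (T+1) × Fin n) ℝ) : Prop :=
  ∀ p q, p.1 < q.1 → M p q = 0


/-- A strictly block-lower-triangular matrix (w.r.t. `Fin (T+1)` blocks) raised to the
power `T+1` vanishes. -/
lemma strict_pow_zero {T n : ℕ}
    (M : Matrix (Fin (T+1) × Fin n) (Fin (T+1) × Fin n) ℝ)
    (h : ∀ p q, (p.1 : ℕ) ≤ (q.1 : ℕ) → M p q = 0) : M ^ (T+1) = 0 := by
  have key : ∀ k (p q : Fin (T+1) × Fin n), (p.1 : ℕ) < (q.1 : ℕ) + k →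
      (M ^ k) p q = 0 := by
    intro k
    induction k with
    | zero =>
      intro p q h'
      have hne : p ≠ q := by
        intro e; rw [e] at h'; omega
      simpa using Matrix.one_apply_ne hne
    | succ k ih =>
      intro p q h'
      rw [pow_succ, Matrix.mul_apply]
      apply Finset.sum_eq_zero
      intro r _
      by_cases hr : (p.1 : ℕ) < (r.1 : ℕ) + k
      · rw [ih p r hr, zero_mul]
      · have : (r.1 : ℕ) ≤ (q.1 : ℕ) := by omega
        rw [h r q this, mul_zero]
  ext p q
  have : (p.1 : ℕ) < (q.1 : ℕ) + (T + 1) := by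
    have := p.1.isLt; omega
  simp [key (T+1) p q this]

lemma mul_pow_shift {α β : Type*} [Fintype α] [Fintype β] [DecidableEq α] [DecidableEq β]
    (A : Matrix α β ℝ) (B : Matrix β α ℝ) (k : ℕ) :
    (A * B) ^ (k + 1) = A * (B * A) ^ k * B := by
  induction k with
  | zero => simp
  | succ k ih =>
    rw [pow_succ, ih, pow_succ]
    simp only [Matrix.mul_assoc]

/-- For block lower triangular `Φx, Φu` and arbitrary model errors
`ΔA, ΔB`, the matrix `ZΔℳΦ` is nilpotent with `(ZΔℳΦ)^(T+1) = 0`, and consequently both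
`I + ZΔℳΦ` and `I + ΦZΔℳ` are invertible. -/
theorem stmt1 {n m T : ℕ} (hn : 0 < n) (hm : 0 < m) (hT : 0 < T)
    (Φx : Matrix (Fin (T+1) × Fin n) (Fin (T+1) × Fin n) ℝ)
    (Φu : Matrix (Fin (T+1) × Fin m) (Fin (T+1) × Fin n) ℝ)
    (hx : BlockLT Φx) (hu : BlockLT Φu)
    (ΔA : Matrix (Fin n) (Fin n) ℝ) (ΔB : Matrix (Fin n) (Fin m) ℝ)
    (Φ : Matrix ((Fin (T+1) × Fin n) ⊕ (Fin (T+1) × Fin m)) (Fin (T+1) × Fin n) ℝ)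
    (hΦ : Φ = Matrix.fromRows Φx Φu)
    (ΔM : Matrix (Fin (T+1) × Fin n) ((Fin (T+1) × Fin n) ⊕ (Fin (T+1) × Fin m)) ℝ)
    (hΔM : ΔM = Matrix.fromCols (blkdiag T ΔA) (blkdiag T ΔB)) :
    (dshift T n * ΔM * Φ) ^ (T+1) = 0 ∧
    IsUnit (1 + dshift T n * ΔM * Φ) ∧
    IsUnit (1 + Φ * dshift T n * ΔM) := by
  -- The product `ΔM * Φ` is block lower triangular.
  set C : Matrix (Fin (T+1) × Fin n) (Fin (T+1) × Fin n) ℝ := ΔM * Φ with hC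
  have hCLT : BlockLT C := by
    intro p q hpq
    rw [hC, hΔM, hΦ, Matrix.fromCols_mul_fromRows, Matrix.add_apply]
    have h1 : (blkdiag T ΔA * Φx) p q = 0 := by
      rw [Matrix.mul_apply]
      apply Finset.sum_eq_zero
      intro r _
      by_cases hr : p.1 = r.1
      · rw [hx r q (by rw [← hr]; exact hpq), mul_zero]
      · simp [blkdiag, hr]
    have h2 : (blkdiag T ΔB * Φu) p q = 0 := by
      rw [Matrix.mul_apply]
      apply Finset.sum_eq_zero
      intro r _
      by_cases hr : p.1 = r.1
      · rw [hu r q (by rw [← hr]; exact hpq), mul_zero]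
      · simp [blkdiag, hr]
    rw [h1, h2, add_zero]
  -- Hence `Z * (ΔM * Φ)` is strictly block lower triangular.
  have hstrict : ∀ p q, (p.1 : ℕ) ≤ (q.1 : ℕ) → (dshift T n * C) p q = 0 := by
    intro p q hpq
    rw [Matrix.mul_apply]
    apply Finset.sum_eq_zero
    intro r _
    by_cases hr : (p.1 : ℕ) = (r.1 : ℕ) + 1 ∧ p.2 = r.2
    · have : r.1 < q.1 := by
        have := hr.1
        exact Fin.lt_def.mpr (by omega)
      rw [hCLT r q this, mul_zero]
    · simp [dshift, hr]
  have hpow : (dshift T n * ΔM * Φ) ^ (T+1) = 0 := by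
    have : dshift T n * ΔM * Φ = dshift T n * C := by rw [hC, Matrix.mul_assoc]
    rw [this]
    exact strict_pow_zero _ hstrict
  refine ⟨hpow, ?_, ?_⟩
  · exact IsNilpotent.isUnit_one_add ⟨T+1, hpow⟩
  · have hassoc : Φ * dshift T n * ΔM = Φ * (dshift T n * ΔM) := Matrix.mul_assoc _ _ _
    have hnil : IsNilpotent (Φ * (dshift T n * ΔM)) := by
      refine ⟨T + 2, ?_⟩
      have := mul_pow_shift Φ (dshift T n * ΔM) (T + 1)
      rw [show T + 2 = (T + 1) + 1 from rfl, this]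
      have : dshift T n * ΔM * Φ = dshift T n * ΔM * Φ := rfl
      rw [hpow]
      simp
    rw [hassoc]
    exact IsNilpotent.isUnit_one_add hnil
end

section
/- (Lemma 1, model mismatch.) Let Φ_x, Φ_u be block lower triangular satisfying (I − Z𝒜̂)Φ_x − Zℬ̂Φ_u = I, Φ = [Φ_x; Φ_u], ΔA = Â − A, ΔB = B̂ − B, Δℳ = [blkdiag_{T+1}(ΔA) blkdiag_{T+1}(ΔB)], and R_Φ = (I + ΦZΔℳ)⁻¹. Given data trajectories (x^i, u^i), i = 1,…,N, define w^i = x^i − Z blkdiag_{T+1}(A) x^i − Z blkdiag_{T+1}(B) u^i and ŵ^i = x^i − Z𝒜̂x^i − Zℬ̂u^i, and the empirical measures P̂ = (1/N)Σ_i δ_{Φŵ^i} (empirical predictive distribution) and P̄ = (1/N)Σ_i δ_{R_Φ Φ w^i} (empirical closed-loop distribution). Then d_W(P̂, P̄) ≤ (1/N) Σ_{i=1}^N ‖ R_Φ Φ Z Δℳ (Φŵ^i − [x^i; u^i]) ‖. -/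
open MeasureTheory Matrix
open scoped ENNReal

/-! ### Auxiliary lemmas -/

lemma l1norm_nonneg {ι : Type*} [Fintype ι] (v : ι → ℝ) : 0 ≤ l1norm v :=
  Finset.sum_nonneg fun _ _ => abs_nonneg _

lemma l1norm_continuous {ι : Type*} [Fintype ι] :
    Continuous fun p : (ι → ℝ) × (ι → ℝ) => l1norm (p.1 - p.2) := by
  unfold l1norm
  refine continuous_finset_sum _ fun i _ => ?_
  exact ((continuous_apply i).comp continuous_fst |>.sub
    ((continuous_apply i).comp continuous_snd)).abs

lemma map_finset_sum_measure {α β : Type*} [MeasurableSpace α] [MeasurableSpace β]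
    {f : α → β} (hf : Measurable f) {ι : Type*} (s : Finset ι) (μ : ι → Measure α) :
    (∑ i ∈ s, μ i).map f = ∑ i ∈ s, (μ i).map f := by
  classical
  induction s using Finset.induction with
  | empty => simp
  | insert _ _ h ih =>
    rw [Finset.sum_insert h, Finset.sum_insert h, Measure.map_add _ _ hf, ih]

lemma integrable_dirac_sm {α E : Type*} [MeasurableSpace α] [MeasurableSingletonClass α]
    [NormedAddCommGroup E] {f : α → E} (hf : StronglyMeasurable f) (a : α) :
    Integrable f (Measure.dirac a) := by
  refine ⟨hf.aestronglyMeasurable, ?_⟩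
  rw [HasFiniteIntegral, lintegral_dirac]
  exact ENNReal.coe_lt_top

/-- The Wasserstein distance between two empirical measures indexed by the same set is
bounded by the average pointwise distance (via the obvious coupling). -/
lemma wass_le_emp {ι : Type*} [Fintype ι] {N : ℕ} (hN : 0 < N)
    (a b : Fin N → (ι → ℝ)) :
    wass (emp a) (emp b) ≤ (N : ℝ)⁻¹ * ∑ i, l1norm (a i - b i) := by
  classical
  set f : (ι → ℝ) × (ι → ℝ) → ℝ := fun p => l1norm (p.1 - p.2) with hf
  have hfc : Continuous f := l1norm_continuous
  set π : Measure ((ι → ℝ) × (ι → ℝ)) :=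
    (N : ℝ≥0∞)⁻¹ • ∑ i, Measure.dirac (a i, b i) with hπ
  have hNe : (N : ℝ≥0∞) ≠ 0 := by exact_mod_cast hN.ne'
  have hprob : IsProbabilityMeasure π := by
    constructor
    rw [hπ]
    simp only [Measure.smul_apply, Measure.coe_finset_sum, Finset.sum_apply,
      Measure.dirac_apply_of_mem (Set.mem_univ _)]
    simp [ENNReal.inv_mul_cancel hNe]
  have hmap1 : π.map Prod.fst = emp a := by
    rw [hπ, Measure.map_smul, map_finset_sum_measure measurable_fst]
    simp only [Measure.map_dirac' measurable_fst]
    rfl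
  have hmap2 : π.map Prod.snd = emp b := by
    rw [hπ, Measure.map_smul, map_finset_sum_measure measurable_snd]
    simp only [Measure.map_dirac' measurable_snd]
    rfl
  have hint : ∫ p, f p ∂π = (N : ℝ)⁻¹ * ∑ i, l1norm (a i - b i) := by
    rw [hπ, integral_smul_measure,
      integral_finset_sum_measure (fun i _ => integrable_dirac_sm hfc.stronglyMeasurable _)]
    simp only [integral_dirac]
    simp [ENNReal.toReal_inv, smul_eq_mul]
    exact Or.inl rfl
  have hmem : (N : ℝ)⁻¹ * ∑ i, l1norm (a i - b i) ∈
      { r | ∃ π : Measure ((ι → ℝ) × (ι → ℝ)),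
        IsProbabilityMeasure π ∧ π.map Prod.fst = emp a ∧ π.map Prod.snd = emp b ∧
        r = ∫ p, l1norm (p.1 - p.2) ∂π } :=
    ⟨π, hprob, hmap1, hmap2, hint.symm⟩
  refine csInf_le ⟨0, ?_⟩ hmem
  rintro r ⟨π', -, -, -, rfl⟩
  exact integral_nonneg fun p => l1norm_nonneg _

/-- The time index of a stacked state/input coordinate. -/
def tIdx {T n m : ℕ} : (Fin (T+1) × Fin n) ⊕ (Fin (T+1) × Fin m) → ℕ :=
  Sum.elim (fun p => (p.1 : ℕ)) (fun p => (p.1 : ℕ))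

lemma pow_entry_zero {κ : Type*} [Fintype κ] [DecidableEq κ] (f : κ → ℕ)
    (M : Matrix κ κ ℝ) (h : ∀ p q, f p ≤ f q → M p q = 0) :
    ∀ (k : ℕ) (p q : κ), f p < f q + k → (M ^ k) p q = 0 := by
  intro k
  induction k with
  | zero =>
    intro p q hpq
    have : p ≠ q := by rintro rfl; omega
    simp [pow_zero, Matrix.one_apply_ne this]
  | succ k ih =>
    intro p q hpq
    rw [pow_succ, Matrix.mul_apply]
    refine Finset.sum_eq_zero fun r _ => ?_
    by_cases hr : f p < f r + k
    · rw [ih p r hr, zero_mul]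
    · have : f r ≤ f q := by omega
      rw [h r q this, mul_zero]

lemma blkdiag_sub {T n m : ℕ} (M M' : Matrix (Fin n) (Fin m) ℝ) :
    blkdiag T (M - M') = blkdiag T M - blkdiag T M' := by
  ext p q
  simp only [blkdiag, Matrix.sub_apply]
  split <;> simp

lemma tri_zero {n m T : ℕ}
    (Φx : Matrix (Fin (T+1) × Fin n) (Fin (T+1) × Fin n) ℝ)
    (Φu : Matrix (Fin (T+1) × Fin m) (Fin (T+1) × Fin n) ℝ)
    (hx : BlockLT Φx) (hu : BlockLT Φu)
    (ΔA : Matrix (Fin n) (Fin n) ℝ) (ΔB : Matrix (Fin n) (Fin m) ℝ)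
    (p q : (Fin (T+1) × Fin n) ⊕ (Fin (T+1) × Fin m))
    (hpq : tIdx p ≤ tIdx q) :
    (Matrix.fromRows Φx Φu * dshift T n *
      Matrix.fromCols (blkdiag T ΔA) (blkdiag T ΔB)) p q = 0 := by
  rw [Matrix.mul_assoc, Matrix.mul_apply]
  refine Finset.sum_eq_zero fun r _ => ?_
  by_cases hr : (r.1 : ℕ) = tIdx q + 1
  · -- first factor is zero
    cases p with
    | inl pn =>
      have hpq' : (pn.1 : ℕ) ≤ tIdx q := hpq
      have hlt : pn.1 < r.1 := Fin.lt_def.mpr (by omega)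
      rw [Matrix.fromRows_apply_inl, hx pn r hlt, zero_mul]
    | inr pm =>
      have hpq' : (pm.1 : ℕ) ≤ tIdx q := hpq
      have hlt : pm.1 < r.1 := Fin.lt_def.mpr (by omega)
      rw [Matrix.fromRows_apply_inr, hu pm r hlt, zero_mul]
  · -- second factor is zero
    have h2 : (dshift T n * Matrix.fromCols (blkdiag T ΔA) (blkdiag T ΔB)) r q = 0 := by
      rw [Matrix.mul_apply]
      refine Finset.sum_eq_zero fun s _ => ?_
      by_cases hs : (r.1 : ℕ) = (s.1 : ℕ) + 1 ∧ r.2 = s.2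
      · have hsq : (s.1 : ℕ) ≠ tIdx q := by omega
        cases q with
        | inl qn =>
          rw [Matrix.fromCols_apply_inl]
          have : s.1 ≠ qn.1 := by
            intro hh; exact hsq (by simp [tIdx, hh])
          simp [blkdiag, this]
        | inr qm =>
          rw [Matrix.fromCols_apply_inr]
          have : s.1 ≠ qm.1 := by
            intro hh; exact hsq (by simp [tIdx, hh])
          simp [blkdiag, this]
      · simp [dshift, hs]
    rw [h2, mul_zero]

/-- **Lemma 1, model mismatch.** The Wasserstein distance between the
empirical predictive distribution and the empirical closed-loop distribution is bounded by
the average norm of the model-mismatch terms. -/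
theorem stmt6 {n m T N : ℕ} (hn : 0 < n) (hm : 0 < m) (hT : 0 < T) (hN : 0 < N)
    (Ahat A : Matrix (Fin n) (Fin n) ℝ) (Bhat B : Matrix (Fin n) (Fin m) ℝ)
    (Φx : Matrix (Fin (T+1) × Fin n) (Fin (T+1) × Fin n) ℝ)
    (Φu : Matrix (Fin (T+1) × Fin m) (Fin (T+1) × Fin n) ℝ)
    (hx : BlockLT Φx) (hu : BlockLT Φu)
    (hSLS : (1 - dshift T n * blkdiag T Ahat) * Φx - dshift T n * blkdiag T Bhat * Φu = 1)
    (Φ : Matrix ((Fin (T+1) × Fin n) ⊕ (Fin (T+1) × Fin m)) (Fin (T+1) × Fin n) ℝ)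
    (hΦ : Φ = Matrix.fromRows Φx Φu)
    (ΔM : Matrix (Fin (T+1) × Fin n) ((Fin (T+1) × Fin n) ⊕ (Fin (T+1) × Fin m)) ℝ)
    (hΔM : ΔM = Matrix.fromCols (blkdiag T (Ahat - A)) (blkdiag T (Bhat - B)))
    (RΦ : Matrix ((Fin (T+1) × Fin n) ⊕ (Fin (T+1) × Fin m))
                 ((Fin (T+1) × Fin n) ⊕ (Fin (T+1) × Fin m)) ℝ)
    (hR : RΦ = (1 + Φ * dshift T n * ΔM)⁻¹)
    (x : Fin N → (Fin (T+1) × Fin n) → ℝ) (u : Fin N → (Fin (T+1) × Fin m) → ℝ)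
    (w what : Fin N → (Fin (T+1) × Fin n) → ℝ)
    (hw : ∀ i, w i = x i - (dshift T n * blkdiag T A) *ᵥ x i
        - (dshift T n * blkdiag T B) *ᵥ u i)
    (hwhat : ∀ i, what i = x i - (dshift T n * blkdiag T Ahat) *ᵥ x i
        - (dshift T n * blkdiag T Bhat) *ᵥ u i) :
    wass (emp (fun i => Φ *ᵥ what i)) (emp (fun i => (RΦ * Φ) *ᵥ w i))
      ≤ (N : ℝ)⁻¹ * ∑ i, l1norm
          ((RΦ * Φ * dshift T n * ΔM) *ᵥ (Φ *ᵥ what i - Sum.elim (x i) (u i))) := by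
  classical
  set M' := Φ * dshift T n * ΔM with hM'
  have htri : ∀ p q, tIdx p ≤ tIdx q → M' p q = 0 := by
    intro p q hpq
    rw [hM', hΦ, hΔM]
    exact tri_zero Φx Φu hx hu _ _ p q hpq
  have hnilpow : M' ^ (T+1) = 0 := by
    ext p q
    have hpT : tIdx p ≤ T := by
      cases p with
      | inl pn => exact Nat.lt_succ_iff.mp pn.1.isLt
      | inr pm => exact Nat.lt_succ_iff.mp pm.1.isLt
    have hb : tIdx p < tIdx q + (T+1) := by omega
    simpa using pow_entry_zero tIdx M' htri (T+1) p q hb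
  have hU : IsUnit (1 + M') := IsNilpotent.isUnit_one_add ⟨T+1, hnilpow⟩
  have hRinv : RΦ * (1 + M') = 1 := by
    rw [hR]
    exact Matrix.nonsing_inv_mul _ ((Matrix.isUnit_iff_isUnit_det _).mp hU)
  have hsub : RΦ * M' = 1 - RΦ := by
    have h1 : RΦ + RΦ * M' = 1 := by rw [← hRinv, mul_add, mul_one]
    rw [← h1]
    abel
  have hkey : ∀ i, Φ *ᵥ what i - (RΦ * Φ) *ᵥ w i
      = (RΦ * Φ * dshift T n * ΔM) *ᵥ (Φ *ᵥ what i - Sum.elim (x i) (u i)) := by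
    intro i
    have hwi : w i = what i + (dshift T n * ΔM) *ᵥ Sum.elim (x i) (u i) := by
      rw [hw, hwhat, hΔM,
        ← Matrix.mulVec_mulVec (Sum.elim (x i) (u i)) (dshift T n)
          (Matrix.fromCols (blkdiag T (Ahat - A)) (blkdiag T (Bhat - B))),
        Matrix.fromCols_mulVec_sumElim, blkdiag_sub, blkdiag_sub]
      simp only [Matrix.mulVec_add, Matrix.sub_mulVec, Matrix.mulVec_sub,
        ← Matrix.mulVec_mulVec]
      abel
    have hA : RΦ * Φ * dshift T n * ΔM = RΦ * M' := by
      simp only [hM', Matrix.mul_assoc]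
    have e1 : (RΦ * Φ) *ᵥ ((dshift T n * ΔM) *ᵥ Sum.elim (x i) (u i))
        = (RΦ * M') *ᵥ Sum.elim (x i) (u i) := by
      rw [Matrix.mulVec_mulVec]
      congr 1
      simp only [hM', Matrix.mul_assoc]
    have e2 : (RΦ * M') *ᵥ (Φ *ᵥ what i)
        = Φ *ᵥ what i - RΦ *ᵥ (Φ *ᵥ what i) := by
      rw [hsub, Matrix.sub_mulVec, Matrix.one_mulVec]
    rw [hwi, Matrix.mulVec_add, hA, Matrix.mulVec_sub, e1, e2,
      ← Matrix.mulVec_mulVec (what i) RΦ Φ]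
    abel
  calc wass (emp (fun i => Φ *ᵥ what i)) (emp (fun i => (RΦ * Φ) *ᵥ w i))
      ≤ (N : ℝ)⁻¹ * ∑ i, l1norm (Φ *ᵥ what i - (RΦ * Φ) *ᵥ w i) :=
        wass_le_emp hN _ _
    _ = (N : ℝ)⁻¹ * ∑ i, l1norm
          ((RΦ * Φ * dshift T n * ΔM) *ᵥ (Φ *ᵥ what i - Sum.elim (x i) (u i))) := by
        congr 1
        exact Finset.sum_congr rfl fun i _ => by rw [hkey i]
end
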